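/- Let S and A be finite types and consider a single Markov decision process on S and A with initial distribution ρ₀ and transition kernel T : S × A → PMF(S), together with two policies π₁, π₂ : S → PMF(A) satisfying D_TV(π₁(s), π₂(s)) ≤ ε_π for all s ∈ S. Let r : S × A → ℝ satisfy |r(s,a)| ≤ R for all s, a, let γ ∈ [0,1), and let G(π₁) and G(π₂) denote the discounted returns of π₁ and π₂ under T. Then |G(π₁) − G(π₂)| ≤ 2Rγ·ε_π/(1 − γ)² + 2R·ε_π/(1 − γ). -/

import Mathlib

open scoped BigOperators

/-- Total variation distance between two PMFs on a finite type. -/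
noncomputable def tv {X : Type*} [Fintype X] (p q : PMF X) : ℝ :=
  (1 / 2) * ∑ x, |(p x).toReal - (q x).toReal|

lemma pmf_sum_toReal {X : Type*} [Fintype X] (p : PMF X) :
    ∑ x, (p x).toReal = 1 := by
  have h := p.tsum_coe
  rw [tsum_fintype] at h
  rw [← ENNReal.toReal_sum (fun a _ => p.apply_ne_top a), h, ENNReal.toReal_one]

/-- For a single MDP (kernel `T`, initial distribution `ρ₀`) and two
policies `π₁, π₂` with `D_TV(π₁(s), π₂(s)) ≤ ε_π` for all `s`, reward bounded by `R`
and discount `γ ∈ [0,1)`, the discounted returns satisfy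
`|G(π₁) − G(π₂)| ≤ 2Rγ·ε_π/(1−γ)² + 2R·ε_π/(1−γ)`. -/
theorem return_gap_same_dynamics {S A : Type*} [Fintype S] [Fintype A]
    (ρ₀ : PMF S) (T : S × A → PMF S) (π₁ π₂ : S → PMF A) (επ : ℝ)
    (hπ : ∀ s, tv (π₁ s) (π₂ s) ≤ επ)
    (μ₁ μ₂ : ℕ → PMF S)
    (hμ₁0 : μ₁ 0 = ρ₀) (hμ₂0 : μ₂ 0 = ρ₀)
    (hμ₁ : ∀ t s', μ₁ (t + 1) s' = ∑ s, ∑ a, μ₁ t s * π₁ s a * T (s, a) s')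
    (hμ₂ : ∀ t s', μ₂ (t + 1) s' = ∑ s, ∑ a, μ₂ t s * π₂ s a * T (s, a) s')
    (p₁ p₂ : ℕ → PMF (S × A))
    (hp₁ : ∀ t s a, p₁ t (s, a) = μ₁ t s * π₁ s a)
    (hp₂ : ∀ t s a, p₂ t (s, a) = μ₂ t s * π₂ s a)
    (r : S × A → ℝ) (R : ℝ) (hr : ∀ s a, |r (s, a)| ≤ R)
    (γ : ℝ) (hγ0 : 0 ≤ γ) (hγ1 : γ < 1)
    (G₁ G₂ : ℝ)
    (hG₁ : G₁ = ∑' t : ℕ, γ ^ t * ∑ sa : S × A, (p₁ t sa).toReal * r sa)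
    (hG₂ : G₂ = ∑' t : ℕ, γ ^ t * ∑ sa : S × A, (p₂ t sa).toReal * r sa) :
    |G₁ - G₂| ≤ 2 * R * γ * επ / (1 - γ) ^ 2 + 2 * R * επ / (1 - γ) := by
  classical
  obtain ⟨s₀, -⟩ := ρ₀.support_nonempty
  obtain ⟨a₀, -⟩ := (π₁ s₀).support_nonempty
  have hε : 0 ≤ επ := le_trans (by unfold tv; positivity) (hπ s₀)
  have hR : 0 ≤ R := le_trans (abs_nonneg _) (hr s₀ a₀)
  -- policy TV in sum form
  have hπ' : ∀ s, ∑ a, |((π₁ s) a).toReal - ((π₂ s) a).toReal| ≤ 2 * επ := by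
    intro s
    have := hπ s
    unfold tv at this
    linarith
  set d : ℕ → ℝ := fun t => ∑ s, |(μ₁ t s).toReal - (μ₂ t s).toReal| with hd_def
  set e : ℕ → ℝ := fun t => ∑ sa : S × A, |(p₁ t sa).toReal - (p₂ t sa).toReal| with he_def
  -- e t ≤ d t + 2επ
  have hkey : ∀ t, e t ≤ d t + 2 * επ := by
    intro t
    have hrew : e t = ∑ s, ∑ a,
        |(μ₁ t s).toReal * ((π₁ s) a).toReal - (μ₂ t s).toReal * ((π₂ s) a).toReal| := by
      simp only [he_def]
      rw [Fintype.sum_prod_type]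
      refine Finset.sum_congr rfl fun s _ => Finset.sum_congr rfl fun a _ => ?_
      rw [hp₁, hp₂, ENNReal.toReal_mul, ENNReal.toReal_mul]
    rw [hrew]
    have hstep : ∀ s, ∑ a,
        |(μ₁ t s).toReal * ((π₁ s) a).toReal - (μ₂ t s).toReal * ((π₂ s) a).toReal|
        ≤ |(μ₁ t s).toReal - (μ₂ t s).toReal| + (μ₂ t s).toReal * (2 * επ) := by
      intro s
      have h1 : ∀ a, |(μ₁ t s).toReal * ((π₁ s) a).toReal - (μ₂ t s).toReal * ((π₂ s) a).toReal|
          ≤ |(μ₁ t s).toReal - (μ₂ t s).toReal| * ((π₁ s) a).toReal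
            + (μ₂ t s).toReal * |((π₁ s) a).toReal - ((π₂ s) a).toReal| := by
        intro a
        have : (μ₁ t s).toReal * ((π₁ s) a).toReal - (μ₂ t s).toReal * ((π₂ s) a).toReal
            = ((μ₁ t s).toReal - (μ₂ t s).toReal) * ((π₁ s) a).toReal
              + (μ₂ t s).toReal * (((π₁ s) a).toReal - ((π₂ s) a).toReal) := by ring
        rw [this]
        refine le_trans (abs_add_le _ _) ?_
        rw [abs_mul, abs_mul, abs_of_nonneg ENNReal.toReal_nonneg,
          abs_of_nonneg (ENNReal.toReal_nonneg)]
      calc ∑ a, |(μ₁ t s).toReal * ((π₁ s) a).toReal - (μ₂ t s).toReal * ((π₂ s) a).toReal|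
          ≤ ∑ a, (|(μ₁ t s).toReal - (μ₂ t s).toReal| * ((π₁ s) a).toReal
            + (μ₂ t s).toReal * |((π₁ s) a).toReal - ((π₂ s) a).toReal|) :=
            Finset.sum_le_sum fun a _ => h1 a
        _ = |(μ₁ t s).toReal - (μ₂ t s).toReal| * (∑ a, ((π₁ s) a).toReal)
            + (μ₂ t s).toReal * (∑ a, |((π₁ s) a).toReal - ((π₂ s) a).toReal|) := by
            rw [Finset.sum_add_distrib, ← Finset.mul_sum, ← Finset.mul_sum]
        _ ≤ |(μ₁ t s).toReal - (μ₂ t s).toReal| + (μ₂ t s).toReal * (2 * επ) := by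
            rw [pmf_sum_toReal, mul_one]
            exact add_le_add le_rfl
              (mul_le_mul_of_nonneg_left (hπ' s) ENNReal.toReal_nonneg)
    calc ∑ s, ∑ a, |(μ₁ t s).toReal * ((π₁ s) a).toReal - (μ₂ t s).toReal * ((π₂ s) a).toReal|
        ≤ ∑ s, (|(μ₁ t s).toReal - (μ₂ t s).toReal| + (μ₂ t s).toReal * (2 * επ)) :=
          Finset.sum_le_sum fun s _ => hstep s
      _ = d t + (∑ s, (μ₂ t s).toReal) * (2 * επ) := by
          rw [Finset.sum_add_distrib, ← Finset.sum_mul]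
      _ = d t + 2 * επ := by rw [pmf_sum_toReal, one_mul]
  -- marginal expansion in reals
  have hexp : ∀ (μ : ℕ → PMF S) (π : S → PMF A),
      (∀ t s', μ (t + 1) s' = ∑ s, ∑ a, μ t s * π s a * T (s, a) s') →
      ∀ t s', (μ (t + 1) s').toReal
        = ∑ s, ∑ a, (μ t s).toReal * ((π s) a).toReal * (T (s, a) s').toReal := by
    intro μ π hμ t s'
    rw [hμ t s']
    rw [ENNReal.toReal_sum (fun s _ => ?_)]
    · refine Finset.sum_congr rfl fun s _ => ?_
      rw [ENNReal.toReal_sum (fun a _ => ?_)]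
      · refine Finset.sum_congr rfl fun a _ => ?_
        rw [ENNReal.toReal_mul, ENNReal.toReal_mul]
      · exact ENNReal.mul_ne_top (ENNReal.mul_ne_top ((μ t).apply_ne_top s)
          ((π s).apply_ne_top a)) ((T (s, a)).apply_ne_top s')
    · refine ENNReal.sum_ne_top.mpr fun a _ => ?_
      exact ENNReal.mul_ne_top (ENNReal.mul_ne_top ((μ t).apply_ne_top s)
        ((π s).apply_ne_top a)) ((T (s, a)).apply_ne_top s')
  -- d (t+1) ≤ e t
  have hde : ∀ t, d (t + 1) ≤ e t := by
    intro t
    have h1 : ∀ s', |(μ₁ (t + 1) s').toReal - (μ₂ (t + 1) s').toReal|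
        ≤ ∑ s, ∑ a, |(p₁ t (s, a)).toReal - (p₂ t (s, a)).toReal| * (T (s, a) s').toReal := by
      intro s'
      rw [hexp μ₁ π₁ hμ₁ t s', hexp μ₂ π₂ hμ₂ t s']
      rw [← Finset.sum_sub_distrib]
      refine le_trans (Finset.abs_sum_le_sum_abs _ _) (Finset.sum_le_sum fun s _ => ?_)
      rw [← Finset.sum_sub_distrib]
      refine le_trans (Finset.abs_sum_le_sum_abs _ _) (Finset.sum_le_sum fun a _ => ?_)
      rw [hp₁, hp₂, ENNReal.toReal_mul, ENNReal.toReal_mul, ← sub_mul, abs_mul,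
        abs_of_nonneg ENNReal.toReal_nonneg]
    calc d (t + 1) ≤ ∑ s', ∑ s, ∑ a,
          |(p₁ t (s, a)).toReal - (p₂ t (s, a)).toReal| * (T (s, a) s').toReal :=
          Finset.sum_le_sum fun s' _ => h1 s'
      _ = ∑ s, ∑ a, |(p₁ t (s, a)).toReal - (p₂ t (s, a)).toReal|
            * (∑ s', (T (s, a) s').toReal) := by
          rw [Finset.sum_comm]
          refine Finset.sum_congr rfl fun s _ => ?_
          rw [Finset.sum_comm]
          refine Finset.sum_congr rfl fun a _ => ?_
          rw [Finset.mul_sum]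
      _ = e t := by
          simp only [he_def]
          rw [Fintype.sum_prod_type]
          refine Finset.sum_congr rfl fun s _ => (Finset.sum_congr rfl fun a _ => ?_)
          rw [pmf_sum_toReal, mul_one]
  -- d t ≤ 2 t επ
  have hdbound : ∀ t, d t ≤ 2 * t * επ := by
    intro t
    induction t with
    | zero =>
      simp only [hd_def, hμ₁0, hμ₂0, sub_self, abs_zero, Finset.sum_const_zero,
        Nat.cast_zero, mul_zero, zero_mul, le_refl]
    | succ n ih =>
      calc d (n + 1) ≤ e n := hde n
        _ ≤ d n + 2 * επ := hkey n
        _ ≤ 2 * n * επ + 2 * επ := by linarith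
        _ = 2 * (n + 1 : ℕ) * επ := by push_cast; ring
  have hebound : ∀ t, e t ≤ 2 * (t + 1) * επ := by
    intro t
    calc e t ≤ d t + 2 * επ := hkey t
      _ ≤ 2 * t * επ + 2 * επ := by linarith [hdbound t]
      _ = 2 * (t + 1) * επ := by ring
  -- per-step reward sums
  set f₁ : ℕ → ℝ := fun t => ∑ sa : S × A, (p₁ t sa).toReal * r sa with hf₁
  set f₂ : ℕ → ℝ := fun t => ∑ sa : S × A, (p₂ t sa).toReal * r sa with hf₂
  have hfbound : ∀ (p : ℕ → PMF (S × A)) t,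
      |∑ sa : S × A, (p t sa).toReal * r sa| ≤ R := by
    intro p t
    calc |∑ sa : S × A, (p t sa).toReal * r sa|
        ≤ ∑ sa : S × A, |(p t sa).toReal * r sa| := Finset.abs_sum_le_sum_abs _ _
      _ ≤ ∑ sa : S × A, (p t sa).toReal * R := by
          refine Finset.sum_le_sum fun sa _ => ?_
          rw [abs_mul, abs_of_nonneg ENNReal.toReal_nonneg]
          exact mul_le_mul_of_nonneg_left (hr sa.1 sa.2) ENNReal.toReal_nonneg
      _ = R := by rw [← Finset.sum_mul, pmf_sum_toReal, one_mul]
  have hdiff : ∀ t, |f₁ t - f₂ t| ≤ 2 * R * (t + 1) * επ := by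
    intro t
    calc |f₁ t - f₂ t|
        = |∑ sa : S × A, ((p₁ t sa).toReal - (p₂ t sa).toReal) * r sa| := by
          rw [hf₁, hf₂, ← Finset.sum_sub_distrib]
          congr 1
          exact Finset.sum_congr rfl fun sa _ => by ring
      _ ≤ ∑ sa : S × A, |(p₁ t sa).toReal - (p₂ t sa).toReal| * R := by
          refine le_trans (Finset.abs_sum_le_sum_abs _ _) (Finset.sum_le_sum fun sa _ => ?_)
          rw [abs_mul]
          exact mul_le_mul_of_nonneg_left (hr sa.1 sa.2) (abs_nonneg _)
      _ = R * e t := by rw [← Finset.sum_mul, he_def]; ring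
      _ ≤ R * (2 * (t + 1) * επ) := mul_le_mul_of_nonneg_left (hebound t) hR
      _ = 2 * R * (t + 1) * επ := by ring
  -- summability
  have hγn : ‖γ‖ < 1 := by rw [Real.norm_eq_abs, abs_of_nonneg hγ0]; exact hγ1
  have hsum : ∀ (f : ℕ → ℝ), (∀ t, |f t| ≤ R) → Summable (fun t => γ ^ t * f t) := by
    intro f hf
    refine Summable.of_norm_bounded
      ((summable_geometric_of_lt_one hγ0 hγ1).mul_right R) fun t => ?_
    rw [Real.norm_eq_abs, abs_mul, abs_pow, abs_of_nonneg hγ0]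
    exact mul_le_mul_of_nonneg_left (hf t) (pow_nonneg hγ0 t)
  have hs₁ : Summable (fun t => γ ^ t * f₁ t) := hsum f₁ (fun t => hfbound p₁ t)
  have hs₂ : Summable (fun t => γ ^ t * f₂ t) := hsum f₂ (fun t => hfbound p₂ t)
  -- bounding series
  set c : ℕ → ℝ := fun t => 2 * R * επ * ((t : ℝ) * γ ^ t) + 2 * R * επ * γ ^ t with hc_def
  have hcsum : HasSum c (2 * R * επ * (γ / (1 - γ) ^ 2) + 2 * R * επ * (1 - γ)⁻¹) :=
    ((hasSum_coe_mul_geometric_of_norm_lt_one hγn).mul_left _).add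
      ((hasSum_geometric_of_lt_one hγ0 hγ1).mul_left _)
  have hterm : ∀ t, |γ ^ t * f₁ t - γ ^ t * f₂ t| ≤ c t := by
    intro t
    rw [← mul_sub, abs_mul, abs_pow, abs_of_nonneg hγ0]
    calc γ ^ t * |f₁ t - f₂ t| ≤ γ ^ t * (2 * R * (t + 1) * επ) :=
        mul_le_mul_of_nonneg_left (hdiff t) (pow_nonneg hγ0 t)
      _ = c t := by rw [hc_def]; ring
  have habs_sum : Summable (fun t => |γ ^ t * f₁ t - γ ^ t * f₂ t|) :=
    Summable.of_nonneg_of_le (fun t => abs_nonneg _) hterm hcsum.summable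
  have hGdiff : G₁ - G₂ = ∑' t, (γ ^ t * f₁ t - γ ^ t * f₂ t) := by
    rw [hG₁, hG₂, ← Summable.tsum_sub hs₁ hs₂]
  rw [hGdiff]
  calc |∑' t, (γ ^ t * f₁ t - γ ^ t * f₂ t)|
      ≤ ∑' t, |γ ^ t * f₁ t - γ ^ t * f₂ t| := by
        have h := norm_tsum_le_tsum_norm (f := fun t => γ ^ t * f₁ t - γ ^ t * f₂ t)
          (by simpa [Real.norm_eq_abs] using habs_sum)
        simpa [Real.norm_eq_abs] using h
    _ ≤ ∑' t, c t := Summable.tsum_le_tsum hterm habs_sum hcsum.summable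
    _ = 2 * R * επ * (γ / (1 - γ) ^ 2) + 2 * R * επ * (1 - γ)⁻¹ := hcsum.tsum_eq
    _ = 2 * R * γ * επ / (1 - γ) ^ 2 + 2 * R * επ / (1 - γ) := by ring
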